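/- Let X be a finite set and (λ_x)_{x∈X} a probability distribution with max_x λ_x < 1/2. Then there exists a joint probability distribution (b_{x,x'})_{x,x'∈X} with both marginals equal to (λ_x) and with b_{x,x} = 0 for every x ∈ X. -/
import Mathlib


open Finset

open Set MeasureTheory in
/-- if every probability `λ_x` is `< 1/2`, there is a coupling of `(λ_x)` with
itself that puts zero mass on the diagonal. -/
theorem exists_coupling_zero_diagonal {X : Type*} [Fintype X] (l : X → ℝ)
    (hl0 : ∀ x, 0 ≤ l x) (hl1 : ∑ x, l x = 1) (hmax : ∀ x, l x < 1 / 2) :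
    ∃ b : X × X → ℝ, (∀ p, 0 ≤ b p) ∧ (∀ x, ∑ x', b (x, x') = l x) ∧
      (∀ x', ∑ x, b (x, x') = l x') ∧ ∀ x, b (x, x) = 0 := by
  classical
  set n := Fintype.card X with hn
  set e : X ≃ Fin n := Fintype.equivFin X with he
  set S : ℕ → ℝ := fun k => ∑ y ∈ univ.filter (fun y => (e y : ℕ) < k), l y with hS
  set c : X → ℝ := fun x => S (e x) with hc
  set A : X → Set ℝ := fun x => Ico (c x) (c x + l x) with hA
  set B : X → Set ℝ := fun y =>
    ((· + (1/2 : ℝ)) ⁻¹' (A y ∩ Ico (1/2 : ℝ) 1)) ∪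
    ((· + (-(1/2) : ℝ)) ⁻¹' (A y ∩ Ico (0 : ℝ) (1/2 : ℝ))) with hB
  -- partial sums are monotone
  have hSmono : ∀ k m : ℕ, k ≤ m → S k ≤ S m := by
    intro k m hkm
    apply Finset.sum_le_sum_of_subset_of_nonneg
    · intro y hy
      simp only [Finset.mem_filter, Finset.mem_univ, true_and] at *
      omega
    · intro i _ _; exact hl0 i
  have hSsucc : ∀ x : X, S ((e x : ℕ) + 1) = c x + l x := by
    intro x
    have hfil : univ.filter (fun y => (e y : ℕ) < (e x : ℕ) + 1)
        = insert x (univ.filter (fun y => (e y : ℕ) < (e x : ℕ))) := by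
      ext y
      simp only [Finset.mem_filter, Finset.mem_insert, Finset.mem_univ, true_and]
      constructor
      · intro hy
        rcases Nat.lt_succ_iff_lt_or_eq.mp hy with h | h
        · exact Or.inr h
        · left
          have : e y = e x := Fin.ext h
          exact e.injective this
      · rintro (rfl | h)
        · exact Nat.lt_succ_self _
        · exact Nat.lt_succ_of_lt h
    have hx : x ∉ univ.filter (fun y => (e y : ℕ) < (e x : ℕ)) := by
      simp
    rw [hS]
    simp only
    rw [hfil, Finset.sum_insert hx, hc]
    ring
  have hSn : ∀ k, n ≤ k → S k = 1 := by
    intro k hk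
    rw [hS]
    simp only
    rw [Finset.filter_true_of_mem (fun y _ => lt_of_lt_of_le (e y).is_lt hk), hl1]
  have hc0 : ∀ x, 0 ≤ c x := by
    intro x
    exact Finset.sum_nonneg fun i _ => hl0 i
  have hc1 : ∀ x, c x + l x ≤ 1 := by
    intro x
    rw [← hSsucc x, ← hSn n le_rfl]
    exact hSmono _ _ (e x).is_lt
  have hAsub : ∀ x, A x ⊆ Ico (0:ℝ) 1 := by
    intro x t ht
    exact ⟨le_trans (hc0 x) ht.1, lt_of_lt_of_le ht.2 (hc1 x)⟩
  have hAdisj : ∀ x y : X, x ≠ y → Disjoint (A x) (A y) := by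
    have key : ∀ x y : X, (e x : ℕ) < (e y : ℕ) → Disjoint (A x) (A y) := by
      intro x y hxy
      have h1 : c x + l x ≤ c y := by
        rw [← hSsucc x]; exact hSmono _ _ hxy
      rw [Set.disjoint_left]
      intro t ht1 ht2
      exact absurd (lt_of_lt_of_le ht1.2 (le_trans h1 ht2.1)) (lt_irrefl t)
    intro x y hxy
    rcases lt_trichotomy ((e x : ℕ)) ((e y : ℕ)) with h | h | h
    · exact key x y h
    · exact absurd (e.injective (Fin.ext h)) hxy
    · exact (key y x h).symm
  have hcov : ∀ k : ℕ, Ico (0:ℝ) (S k) ⊆ ⋃ x, A x := by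
    intro k
    induction k with
    | zero =>
      have : S 0 = 0 := by
        rw [hS]; simp
      rw [this, Set.Ico_self]
      exact Set.empty_subset _
    | succ k ih =>
      intro t ht
      by_cases hk : k < n
      · set x := e.symm ⟨k, hk⟩ with hx
        have hex : (e x : ℕ) = k := by rw [hx]; simp
        have hcx : c x = S k := by rw [hc]; simp only; rw [hex]
        have hcx1 : c x + l x = S (k + 1) := by rw [← hSsucc x, hex]
        by_cases htk : t < S k
        · exact ih ⟨ht.1, htk⟩
        · exact Set.mem_iUnion.mpr ⟨x, ⟨hcx ▸ not_lt.mp htk, hcx1 ▸ ht.2⟩⟩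
      · have : S (k+1) = S k := by
          rw [hSn (k+1) (by omega), hSn k (by omega)]
        exact ih ⟨ht.1, this ▸ ht.2⟩
  have hAunion : (⋃ x, A x) = Ico (0:ℝ) 1 := by
    apply Set.Subset.antisymm
    · exact Set.iUnion_subset hAsub
    · rw [← hSn n le_rfl]; exact hcov n
  have hBsub : ∀ y, B y ⊆ Ico (0:ℝ) 1 := by
    intro y t ht
    rcases ht with ht | ht
    · obtain ⟨-, h1, h2⟩ := ht
      simp only [Set.mem_preimage, Set.mem_Ico] at *
      constructor <;> linarith
    · obtain ⟨-, h1, h2⟩ := ht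
      simp only [Set.mem_preimage, Set.mem_Ico] at *
      constructor <;> linarith
  have hBdisj : ∀ x y : X, x ≠ y → Disjoint (B x) (B y) := by
    intro x y hxy
    rw [Set.disjoint_left]
    rintro t (⟨hA1, hI1⟩ | ⟨hA1, hI1⟩) (⟨hA2, hI2⟩ | ⟨hA2, hI2⟩)
    · exact Set.disjoint_left.mp (hAdisj x y hxy) hA1 hA2
    · simp only [Set.mem_Ico] at hI1 hI2; linarith [hI1.1, hI2.2]
    · simp only [Set.mem_Ico] at hI1 hI2; linarith [hI2.1, hI1.2]
    · exact Set.disjoint_left.mp (hAdisj x y hxy) hA1 hA2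
  have hBunion : (⋃ y, B y) = Ico (0:ℝ) 1 := by
    apply Set.Subset.antisymm
    · exact Set.iUnion_subset hBsub
    · intro t ht
      by_cases htm : t < 1/2
      · have h1 : t + 1/2 ∈ Ico (0:ℝ) 1 := ⟨by linarith [ht.1], by linarith⟩
        rw [← hAunion] at h1
        obtain ⟨y, hy⟩ := Set.mem_iUnion.mp h1
        refine Set.mem_iUnion.mpr ⟨y, Or.inl ⟨hy, ⟨by linarith [ht.1], by linarith⟩⟩⟩
      · have h1 : t + -(1/2) ∈ Ico (0:ℝ) 1 := ⟨by linarith, by linarith [ht.2]⟩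
        rw [← hAunion] at h1
        obtain ⟨y, hy⟩ := Set.mem_iUnion.mp h1
        refine Set.mem_iUnion.mpr ⟨y, Or.inr ⟨hy, ⟨by linarith, by linarith [ht.2]⟩⟩⟩
  have hAm : ∀ x, MeasurableSet (A x) := fun x => measurableSet_Ico
  have hBm : ∀ y, MeasurableSet (B y) := by
    intro y
    apply MeasurableSet.union
    · exact ((hAm y).inter measurableSet_Ico).preimage (measurable_add_const _)
    · exact ((hAm y).inter measurableSet_Ico).preimage (measurable_add_const _)
  have hvolA : ∀ x, volume (A x) = ENNReal.ofReal (l x) := by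
    intro x
    rw [hA]; simp [Real.volume_Ico]
  have hvolB : ∀ y, volume (B y) = ENNReal.ofReal (l y) := by
    intro y
    have hd : Disjoint ((· + (1/2 : ℝ)) ⁻¹' (A y ∩ Ico (1/2 : ℝ) 1))
        ((· + (-(1/2) : ℝ)) ⁻¹' (A y ∩ Ico (0 : ℝ) (1/2 : ℝ))) := by
      rw [Set.disjoint_left]
      rintro t ⟨-, -, h1⟩ ⟨-, h2, -⟩
      simp only [Set.mem_Ico] at *
      linarith
    rw [hB]
    simp only
    rw [measure_union hd (((hAm y).inter measurableSet_Ico).preimage (measurable_add_const _)),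
      measure_preimage_add_right, measure_preimage_add_right]
    have hd2 : Disjoint (A y ∩ Ico (1/2 : ℝ) 1) (A y ∩ Ico (0:ℝ) (1/2 : ℝ)) := by
      rw [Set.disjoint_left]
      rintro t ⟨-, h1⟩ ⟨-, h2⟩
      simp only [Set.mem_Ico] at *
      linarith [h1.1, h2.2]
    rw [← measure_union hd2 ((hAm y).inter measurableSet_Ico)]
    have : A y ∩ Ico (1/2 : ℝ) 1 ∪ A y ∩ Ico (0:ℝ) (1/2 : ℝ) = A y := by
      rw [← Set.inter_union_distrib_left, Set.union_comm,
        Set.Ico_union_Ico_eq_Ico (by norm_num) (by norm_num)]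
      exact Set.inter_eq_left.mpr (hAsub y)
    rw [this, hvolA]
  have hfin : ∀ x y, volume (A x ∩ B y) ≠ ⊤ := by
    intro x y
    refine ne_top_of_le_ne_top ?_ (measure_mono (Set.inter_subset_left))
    rw [hvolA]; exact ENNReal.ofReal_ne_top
  have hrow : ∀ x, ∑ y : X, volume (A x ∩ B y) = ENNReal.ofReal (l x) := by
    intro x
    have hpd : (↑(univ : Finset X) : Set X).PairwiseDisjoint (fun y => A x ∩ B y) := by
      intro a _ b _ hab
      rw [Function.onFun, Set.disjoint_left]
      rintro t ⟨-, h1⟩ ⟨-, h2⟩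
      exact Set.disjoint_left.mp (hBdisj a b hab) h1 h2
    rw [← measure_biUnion_finset hpd (fun y _ => (hAm x).inter (hBm y))]
    have h1 : (⋃ y ∈ (univ : Finset X), A x ∩ B y) = ⋃ y, A x ∩ B y := by simp
    have h2 : (⋃ y, A x ∩ B y) = A x := by
      rw [← Set.inter_iUnion, hBunion]
      exact Set.inter_eq_left.mpr (hAsub x)
    rw [h1, h2, hvolA]
  have hcol : ∀ y, ∑ x : X, volume (A x ∩ B y) = ENNReal.ofReal (l y) := by
    intro y
    have hpd : (↑(univ : Finset X) : Set X).PairwiseDisjoint (fun x => A x ∩ B y) := by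
      intro a _ b _ hab
      rw [Function.onFun, Set.disjoint_left]
      rintro t ⟨h1, -⟩ ⟨h2, -⟩
      exact Set.disjoint_left.mp (hAdisj a b hab) h1 h2
    rw [← measure_biUnion_finset hpd (fun x _ => (hAm x).inter (hBm y))]
    have h1 : (⋃ x ∈ (univ : Finset X), A x ∩ B y) = ⋃ x, A x ∩ B y := by simp
    have h2 : (⋃ x, A x ∩ B y) = B y := by
      rw [← Set.iUnion_inter, hAunion]
      exact Set.inter_eq_right.mpr (hBsub y)
    rw [h1, h2, hvolB]
  refine ⟨fun p => (volume (A p.1 ∩ B p.2)).toReal, fun p => ENNReal.toReal_nonneg, ?_, ?_, ?_⟩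
  · intro x
    rw [← ENNReal.toReal_sum (fun y _ => hfin x y), hrow, ENNReal.toReal_ofReal (hl0 x)]
  · intro y
    rw [← ENNReal.toReal_sum (fun x _ => hfin x y), hcol, ENNReal.toReal_ofReal (hl0 y)]
  · intro x
    have hempty : A x ∩ B x = ∅ := by
      rw [Set.eq_empty_iff_forall_notMem]
      rintro t ⟨htA, (⟨h1, -⟩ | ⟨h1, -⟩)⟩
      · simp only [Set.mem_preimage, hA, Set.mem_Ico] at htA h1
        have := hmax x
        linarith [htA.1, h1.2]
      · simp only [Set.mem_preimage, hA, Set.mem_Ico] at htA h1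
        have := hmax x
        linarith [htA.2, h1.1]
    simp [hempty]
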